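/- Let n ≥ 2 be an integer and let 1 ≤ q < ∞. For every f ∈ L^q(ℝ^n), every x, y ∈ ℝ^n, and every r > 0, the integral ∫_{ℝ^n} |K(z)| |f(z)| dz is finite, where K(z) = |x−z|^{-(n-1)} 𝟙_{{|z−x| ≥ r}}(z) − |y−z|^{-(n-1)} 𝟙_{{|z−y| ≥ r}}(z). In particular the integral formally defining the difference J_r(f)(x) − J_r(f)(y) converges absolutely. -/

import Mathlib

open MeasureTheory Metric
open scoped ENNReal NNReal

/-- Mean value theorem bound for negative real powers. -/
lemma rpow_neg_sub_abs_le {s u a b : ℝ} (hs : 0 < s) (hu : 0 < u)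
    (ha : u ≤ a) (hb : u ≤ b) :
    |a ^ (-s) - b ^ (-s)| ≤ s * u ^ (-(s + 1)) * |a - b| := by
  have key : ∀ t ∈ Set.Ici u, HasDerivWithinAt (fun w : ℝ => w ^ (-s))
      ((-s) * t ^ (-s - 1)) (Set.Ici u) t := fun t ht =>
    (Real.hasDerivAt_rpow_const (Or.inl (lt_of_lt_of_le hu ht).ne')).hasDerivWithinAt
  have bound : ∀ t ∈ Set.Ici u, ‖(-s) * t ^ (-s - 1)‖ ≤ s * u ^ (-(s + 1)) := by
    intro t ht
    have ht' : 0 < t := lt_of_lt_of_le hu ht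
    rw [norm_mul, norm_neg, Real.norm_eq_abs, Real.norm_eq_abs, abs_of_pos hs,
      abs_of_pos (Real.rpow_pos_of_pos ht' _)]
    have h1 : t ^ (-s - 1) ≤ u ^ (-s - 1) :=
      Real.rpow_le_rpow_of_nonpos hu ht (by linarith)
    have : -(s+1) = -s - 1 := by ring
    rw [this]
    nlinarith
  have h := (convex_Ici u).norm_image_sub_le_of_norm_hasDerivWithin_le key bound hb ha
  simpa [Real.norm_eq_abs] using h

lemma aux_integrable (n : ℕ) (hn : 2 ≤ n) (q : ℝ) (hq1 : 1 ≤ q)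
    (f : EuclideanSpace ℝ (Fin n) → ℝ) (hf : MemLp f (ENNReal.ofReal q) volume)
    (x : EuclideanSpace ℝ (Fin n)) (M B C : ℝ) (hC : 0 ≤ C)
    (K : EuclideanSpace ℝ (Fin n) → ℝ) (hK : AEStronglyMeasurable K volume)
    (hbd : ∀ z, |K z| ≤ (closedBall x M).indicator (fun _ => B) z
        + C * (1 + dist z x) ^ (-(n : ℝ))) :
    Integrable (fun z => K z * f z) volume := by
  have hq1' : (1 : ℝ≥0∞) ≤ ENNReal.ofReal q := by
    rw [show (1:ℝ≥0∞) = ENNReal.ofReal 1 by simp]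
    exact ENNReal.ofReal_le_ofReal hq1
  have hfabs : MemLp (fun z => |f z|) (ENNReal.ofReal q) volume := by
    simpa [Real.norm_eq_abs] using hf.norm
  set φ : EuclideanSpace ℝ (Fin n) → ℝ := fun z => (1 + dist z x) ^ (-(n : ℝ)) with hφ_def
  have hφ_cont : Continuous φ := by
    apply Continuous.rpow_const (continuous_const.add (continuous_id.dist continuous_const))
    intro z
    left
    have : (0:ℝ) < 1 + dist z x := by positivity
    exact this.ne'
  have hφ_pos : ∀ z, 0 < φ z := fun z => Real.rpow_pos_of_pos (by positivity) _
  have hφ_le_one : ∀ z, φ z ≤ 1 := fun z =>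
    Real.rpow_le_one_of_one_le_of_nonpos (by simpa using dist_nonneg)
      (neg_nonpos.mpr (by positivity))
  -- piece 1
  have hpiece1 : Integrable ((closedBall x M).indicator fun w => B * |f w|) volume := by
    rw [integrable_indicator_iff measurableSet_closedBall]
    have h1 : MemLp f (ENNReal.ofReal q) (volume.restrict (closedBall x M)) := hf.restrict _
    haveI : IsFiniteMeasure (volume.restrict (closedBall x M)) := by
      constructor
      rw [Measure.restrict_apply_univ]
      exact measure_closedBall_lt_top
    have h2 : Integrable f (volume.restrict (closedBall x M)) :=
      memLp_one_iff_integrable.mp (h1.mono_exponent hq1')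
    exact h2.abs.const_mul B
  -- piece 2
  have hpiece2 : Integrable (fun z => C * φ z * |f z|) volume := by
    rcases eq_or_lt_of_le hq1 with hq | hq
    · -- q = 1
      have hfi : Integrable (fun z => |f z|) volume := by
        rw [← memLp_one_iff_integrable]
        simpa [← hq, ENNReal.ofReal_one] using hfabs
      exact hfi.bdd_mul ((continuous_const.mul hφ_cont).aestronglyMeasurable)
        (c := |C|) (Filter.Eventually.of_forall fun z => by
          rw [Real.norm_eq_abs, abs_mul, abs_of_pos (hφ_pos z)]
          calc |C| * φ z ≤ |C| * 1 := by
                have := hφ_le_one z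
                nlinarith [abs_nonneg C]
            _ = |C| := mul_one _)
    · -- q > 1
      set p : ℝ := q / (q - 1) with hp_def
      have hq0 : 0 < q := lt_trans one_pos hq
      have hq1lt : 0 < q - 1 := by linarith
      have hp_pos : 0 < p := div_pos hq0 hq1lt
      have hp1 : 1 < p := by
        rw [hp_def, lt_div_iff₀ hq1lt]
        linarith
      set p' : ℝ≥0∞ := ENNReal.ofReal p with hp'_def
      have hp'_ne_zero : p' ≠ 0 := by
        simp [hp'_def, ENNReal.ofReal_eq_zero, not_le, hp_pos]
      have hp'_ne_top : p' ≠ ⊤ := ENNReal.ofReal_ne_top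
      have hp'_toReal : p'.toReal = p := ENNReal.toReal_ofReal hp_pos.le
      have hφp : MemLp φ p' volume := by
        have hint : Integrable
            (fun z : EuclideanSpace ℝ (Fin n) => (1 + ‖z‖) ^ (-((n : ℝ) * p))) volume := by
          apply integrable_one_add_norm
          rw [finrank_euclideanSpace_fin]
          have hn' : (2:ℝ) ≤ (n:ℝ) := by exact_mod_cast hn
          nlinarith
        have hint2 : Integrable
            (fun z : EuclideanSpace ℝ (Fin n) => (1 + dist z x) ^ (-((n : ℝ) * p))) volume := by
          have := hint.comp_sub_right x
          simpa [dist_eq_norm] using this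
        have hφint : Integrable (fun z => ‖φ z‖ ^ p'.toReal) volume := by
          refine hint2.congr (Filter.Eventually.of_forall fun z => ?_)
          show (1 + dist z x) ^ (-((n:ℝ) * p)) = ‖φ z‖ ^ p'.toReal
          rw [hp'_toReal, Real.norm_eq_abs, abs_of_pos (hφ_pos z)]
          simp only [hφ_def]
          rw [← Real.rpow_mul (by positivity : (0:ℝ) ≤ 1 + dist z x)]
          congr 1
          ring
        have h1 : MemLp (fun z => ‖φ z‖ ^ p'.toReal) (p' / p') volume := by
          rw [ENNReal.div_self hp'_ne_zero hp'_ne_top, memLp_one_iff_integrable]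
          exact hφint
        exact (memLp_norm_rpow_iff (μ := volume) hφ_cont.aestronglyMeasurable
          hp'_ne_zero hp'_ne_top).mp h1
      have hconj : (1 : ℝ≥0∞) / 1 = 1 / p' + 1 / ENNReal.ofReal q := by
        have hkey : (ENNReal.ofReal p)⁻¹ + (ENNReal.ofReal q)⁻¹ = 1 := by
          rw [← ENNReal.ofReal_inv_of_pos hp_pos, ← ENNReal.ofReal_inv_of_pos hq0,
            ← ENNReal.ofReal_add (by positivity) (by positivity),
            show p⁻¹ + q⁻¹ = 1 by rw [hp_def]; field_simp; ring, ENNReal.ofReal_one]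
        simp only [one_div, hp'_def]
        rw [hkey]
        simp
      have hmem : MemLp ((fun z => C * φ z) • fun z => |f z|) 1 volume :=
        by
          haveI : ENNReal.HolderTriple p' (ENNReal.ofReal q) 1 := ⟨by simpa [one_div] using hconj.symm⟩
          exact hfabs.smul (hφp.const_mul C)
      have := memLp_one_iff_integrable.mp hmem
      refine this.congr (Filter.Eventually.of_forall fun z => ?_)
      simp [smul_eq_mul, mul_assoc]
  -- combine
  have hg : Integrable (fun z =>
      (closedBall x M).indicator (fun w => B * |f w|) z + C * φ z * |f z|) volume :=
    hpiece1.add hpiece2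
  refine hg.mono' (hK.mul hf.1) (Filter.Eventually.of_forall fun z => ?_)
  rw [norm_mul, Real.norm_eq_abs, Real.norm_eq_abs]
  by_cases hz : z ∈ closedBall x M
  · rw [Set.indicator_of_mem hz]
    have h1 := hbd z
    rw [Set.indicator_of_mem hz] at h1
    have h2 : 0 ≤ C * φ z * |f z| := by positivity
    have h3 : 0 ≤ C * φ z := by positivity
    nlinarith [abs_nonneg (f z), abs_nonneg (K z)]
  · rw [Set.indicator_of_notMem hz]
    have h1 := hbd z
    rw [Set.indicator_of_notMem hz] at h1
    rw [zero_add] at h1 ⊢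
    calc |K z| * |f z| ≤ C * φ z * |f z| := by
          apply mul_le_mul_of_nonneg_right _ (abs_nonneg _)
          exact h1
      _ = C * φ z * |f z| := rfl

/-- For n ≥ 2, 1 ≤ q < ∞, f ∈ L^q(ℝ^n), x, y ∈ ℝ^n and r > 0, the integral
∫ |K(z)| |f(z)| dz is finite, where
K(z) = |x−z|^{-(n-1)} 𝟙_{|z−x|≥r}(z) − |y−z|^{-(n-1)} 𝟙_{|z−y|≥r}(z);
in particular the integral formally defining J_r(f)(x) − J_r(f)(y) converges absolutely. -/
theorem stmt_7 (n : ℕ) (hn : 2 ≤ n) (q : ℝ) (hq1 : 1 ≤ q)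
    (f : EuclideanSpace ℝ (Fin n) → ℝ)
    (hf : MemLp f (ENNReal.ofReal q) volume)
    (x y : EuclideanSpace ℝ (Fin n)) (r : ℝ) (hr : 0 < r) :
    ∫⁻ z, ENNReal.ofReal
        |(if r ≤ dist z x then dist x z ^ (-((n : ℝ) - 1)) else 0) -
          (if r ≤ dist z y then dist y z ^ (-((n : ℝ) - 1)) else 0)| *
        (‖f z‖₊ : ENNReal) ∂volume < ⊤ := by
  suffices h : Integrable (fun z =>
      ((if r ≤ dist z x then dist x z ^ (-((n : ℝ) - 1)) else 0) -
        (if r ≤ dist z y then dist y z ^ (-((n : ℝ) - 1)) else 0)) * f z) volume by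
    refine lt_of_le_of_lt (le_of_eq (lintegral_congr fun z => ?_)) h.2
    simp [nnnorm_mul, ENNReal.coe_mul, Real.enorm_eq_ofReal_abs]
    congr 1
    exact (enorm_eq_nnnorm _).symm.trans (Real.enorm_eq_ofReal_abs _)
  have hn' : (2:ℝ) ≤ (n:ℝ) := by exact_mod_cast hn
  set d : ℝ := dist x y with hd_def
  have hd0 : 0 ≤ d := dist_nonneg
  set M : ℝ := 2 * d + 2 * r + 1 with hM_def
  set B : ℝ := 2 * r ^ (-((n:ℝ) - 1)) with hB_def
  set C : ℝ := ((n:ℝ) - 1) * d * (2:ℝ) ^ ((n:ℝ)) * (2:ℝ) ^ ((n:ℝ)) with hC_def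
  have hC : 0 ≤ C := by
    have h1 : (0:ℝ) < (2:ℝ) ^ ((n:ℝ)) := Real.rpow_pos_of_pos two_pos _
    have : (0:ℝ) ≤ (n:ℝ) - 1 := by linarith
    rw [hC_def]; positivity
  apply aux_integrable n hn q hq1 f hf x M B C hC
  · apply Measurable.aestronglyMeasurable
    apply Measurable.sub <;>
    · apply Measurable.ite
      · exact measurableSet_le measurable_const (by fun_prop)
      · fun_prop
      · exact measurable_const
  · intro z
    set s : ℝ := (n:ℝ) - 1 with hs_def
    have hs : 0 < s := by rw [hs_def]; linarith
    have hφpos : (0:ℝ) < (1 + dist z x) ^ (-(n:ℝ)) := Real.rpow_pos_of_pos (by positivity) _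
    by_cases hz : z ∈ closedBall x M
    · rw [Set.indicator_of_mem hz]
      have e1 : |if r ≤ dist z x then dist x z ^ (-s) else 0| ≤ r ^ (-s) := by
        split_ifs with h
        · rw [abs_of_nonneg (Real.rpow_nonneg dist_nonneg _)]
          exact Real.rpow_le_rpow_of_nonpos hr (by rwa [dist_comm]) (by linarith)
        · rw [abs_zero]; positivity
      have e2 : |if r ≤ dist z y then dist y z ^ (-s) else 0| ≤ r ^ (-s) := by
        split_ifs with h
        · rw [abs_of_nonneg (Real.rpow_nonneg dist_nonneg _)]
          exact Real.rpow_le_rpow_of_nonpos hr (by rwa [dist_comm]) (by linarith)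
        · rw [abs_zero]; positivity
      have habs := abs_sub (if r ≤ dist z x then dist x z ^ (-s) else 0)
        (if r ≤ dist z y then dist y z ^ (-s) else 0)
      have hC2 : 0 ≤ C * (1 + dist z x) ^ (-(n:ℝ)) := mul_nonneg hC hφpos.le
      rw [hB_def]
      linarith
    · rw [Set.indicator_of_notMem hz, zero_add]
      have haM : M < dist z x := by simpa [mem_closedBall, not_le] using hz
      have hM1 : (1:ℝ) ≤ M := by rw [hM_def]; linarith
      have ha_pos : 0 < dist z x := by linarith
      have hxa : dist x z = dist z x := dist_comm x z
      have hyb : dist y z = dist z y := dist_comm y z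
      have hbnd : |dist x z - dist y z| ≤ d := abs_dist_sub_le x y z
      obtain ⟨hbnd1, hbnd2⟩ := abs_le.mp hbnd
      have hMd : 2 * d ≤ M := by rw [hM_def]; linarith
      have hb_ge : dist z x / 2 ≤ dist y z := by rw [hxa] at hbnd1; linarith
      have hra : r ≤ dist z x := by linarith
      have hrb : r ≤ dist z y := by rw [← hyb]; rw [hxa] at hbnd1; linarith
      rw [if_pos hra, if_pos hrb]
      have hu : (0:ℝ) < dist z x / 2 := by linarith
      have hmain := rpow_neg_sub_abs_le (a := dist x z) (b := dist y z) hs hu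
        (by rw [hxa]; linarith) hb_ge
      have hs1 : s + 1 = (n:ℝ) := by rw [hs_def]; ring
      have h2pos : (0:ℝ) < (2:ℝ) ^ ((n:ℝ)) := Real.rpow_pos_of_pos two_pos _
      have hstep1 : (dist z x / 2) ^ (-(s+1)) = (2:ℝ) ^ ((n:ℝ)) * dist z x ^ (-(n:ℝ)) := by
        rw [hs1, Real.div_rpow ha_pos.le (by norm_num : (0:ℝ) ≤ 2),
          Real.rpow_neg (by norm_num : (0:ℝ) ≤ 2)]
        field_simp
      have hstep2 : dist z x ^ (-(n:ℝ)) ≤ (2:ℝ) ^ ((n:ℝ)) * (1 + dist z x) ^ (-(n:ℝ)) := by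
        have h2a : (1:ℝ) + dist z x ≤ 2 * dist z x := by linarith
        have hmono : (2 * dist z x) ^ (-(n:ℝ)) ≤ (1 + dist z x) ^ (-(n:ℝ)) :=
          Real.rpow_le_rpow_of_nonpos (by positivity) h2a (by linarith)
        have hmul : (2 * dist z x) ^ (-(n:ℝ)) = (2:ℝ) ^ (-(n:ℝ)) * dist z x ^ (-(n:ℝ)) :=
          Real.mul_rpow (by norm_num) ha_pos.le
        have hcancel : (2:ℝ) ^ ((n:ℝ)) * (2:ℝ) ^ (-(n:ℝ)) = 1 := by
          rw [← Real.rpow_add (by norm_num : (0:ℝ) < 2)]; simp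
        calc dist z x ^ (-(n:ℝ))
            = (2:ℝ) ^ ((n:ℝ)) * ((2:ℝ) ^ (-(n:ℝ)) * dist z x ^ (-(n:ℝ))) := by
              rw [← mul_assoc, hcancel, one_mul]
          _ = (2:ℝ) ^ ((n:ℝ)) * (2 * dist z x) ^ (-(n:ℝ)) := by rw [hmul]
          _ ≤ (2:ℝ) ^ ((n:ℝ)) * (1 + dist z x) ^ (-(n:ℝ)) :=
              mul_le_mul_of_nonneg_left hmono h2pos.le
      have hdpos : 0 ≤ s * (dist z x / 2) ^ (-(s+1)) :=
        mul_nonneg hs.le (Real.rpow_nonneg hu.le _)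
      calc |dist x z ^ (-s) - dist y z ^ (-s)|
          ≤ s * (dist z x / 2) ^ (-(s+1)) * |dist x z - dist y z| := hmain
        _ ≤ s * (dist z x / 2) ^ (-(s+1)) * d := mul_le_mul_of_nonneg_left hbnd hdpos
        _ = s * d * ((2:ℝ) ^ ((n:ℝ)) * dist z x ^ (-(n:ℝ))) := by rw [hstep1]; ring
        _ ≤ s * d * ((2:ℝ) ^ ((n:ℝ)) * ((2:ℝ) ^ ((n:ℝ)) * (1 + dist z x) ^ (-(n:ℝ)))) := by
            apply mul_le_mul_of_nonneg_left _ (mul_nonneg hs.le hd0)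
            exact mul_le_mul_of_nonneg_left hstep2 h2pos.le
        _ = C * (1 + dist z x) ^ (-(n:ℝ)) := by rw [hC_def, hs_def]; ring
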